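/- Let λ ∈ ℝ and let f be holomorphic on the half-plane {s ∈ ℂ : Re s > λ}. Suppose there exist μ ≥ λ, α > 1 and M > 0 such that |f(s)| ≤ M |s|^{−α} for all s with Re s > μ. For x > μ define u(t) = (1/2π) ∫_{−∞}^{∞} e^{(x+iy)t} f(x+iy) dy. Then: (1) for every t ∈ ℝ the defining integral converges absolutely and u is continuous on ℝ; (2) the value u(t) is independent of the choice of x > μ; (3) u(t) = 0 for every t < 0; (4) for every s ∈ ℂ with Re s > μ, the function t ↦ e^{−st} u(t) is absolutely integrable on (0,∞) and ∫₀^∞ e^{−st} u(t) dt = f(s). That is, u given by the Riemann–Fourier formula is the inverse Laplace transform of f. -/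

import Mathlib

open MeasureTheory

set_option maxHeartbeats 1000000

open Set Filter Complex FourierTransform in
private lemma rf_cont {lam : ℝ} {f : ℂ → ℂ} (hf : DifferentiableOn ℂ f {s : ℂ | lam < s.re})
    {x : ℝ} (hx : lam < x) : Continuous fun y : ℝ => f (↑x + ↑y * Complex.I) := by
  have hopen : IsOpen {s : ℂ | lam < s.re} := isOpen_lt continuous_const Complex.continuous_re
  refine (hf.continuousOn.comp_continuous (by continuity) fun y => ?_).congr fun y => rfl
  simp [hx]

open Set Filter Complex FourierTransform in
private lemma rf_ptbound {μ M α : ℝ} {f : ℂ → ℂ} (hα : 1 < α) (hM : 0 < M)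
    (hbound : ∀ s : ℂ, μ < s.re → ‖f s‖ ≤ M * ‖s‖ ^ (-α))
    {x y : ℝ} (hx : μ < x) (h : (1 + |y|) / 2 ≤ ‖↑x + ↑y * Complex.I‖) :
    ‖f (↑x + ↑y * Complex.I)‖ ≤ M * 2 ^ α * (1 + ‖y‖) ^ (-α) := by
  have h0 : (0:ℝ) < (1 + |y|) / 2 := by positivity
  have hb := hbound (↑x + ↑y * Complex.I) (by simp [hx])
  refine hb.trans ?_
  have h2 : ‖↑x + ↑y * Complex.I‖ ^ (-α) ≤ ((1 + |y|) / 2) ^ (-α) :=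
    Real.rpow_le_rpow_of_nonpos h0 h (by linarith)
  have h3 : ((1 + |y|) / 2) ^ (-α) = 2 ^ α * (1 + |y|) ^ (-α) := by
    rw [Real.div_rpow (by positivity) (by norm_num), Real.rpow_neg (by norm_num : (0:ℝ) ≤ 2),
      mul_comm]
    field_simp
  calc M * ‖↑x + ↑y * Complex.I‖ ^ (-α) ≤ M * ((1 + |y|) / 2) ^ (-α) := by
        exact mul_le_mul_of_nonneg_left h2 hM.le
    _ = M * 2 ^ α * (1 + ‖y‖) ^ (-α) := by rw [h3, Real.norm_eq_abs]; ring

open Set Filter Complex FourierTransform in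
private lemma rf_majorant_int {M α : ℝ} (hα : 1 < α) :
    Integrable fun y : ℝ => M * 2 ^ α * (1 + ‖y‖) ^ (-α) :=
  (integrable_one_add_norm (by simpa using hα)).const_mul _

open Set Filter Complex FourierTransform in
private lemma rf_int {lam μ M α : ℝ} {f : ℂ → ℂ}
    (hf : DifferentiableOn ℂ f {s : ℂ | lam < s.re}) (hμ : lam ≤ μ) (hα : 1 < α) (hM : 0 < M)
    (hbound : ∀ s : ℂ, μ < s.re → ‖f s‖ ≤ M * ‖s‖ ^ (-α))
    {x : ℝ} (hx : μ < x) : Integrable fun y : ℝ => f (↑x + ↑y * Complex.I) := by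
  have hxl : lam < x := lt_of_le_of_lt hμ hx
  have hcont := rf_cont hf hxl
  have hmaj := rf_majorant_int (M := M) hα
  have htail : ∀ y : ℝ, 1 ≤ |y| → ‖f (↑x + ↑y * Complex.I)‖ ≤ M * 2 ^ α * (1 + ‖y‖) ^ (-α) := by
    intro y hy
    refine rf_ptbound hα hM hbound hx ?_
    have := Complex.abs_im_le_norm (↑x + ↑y * Complex.I)
    simp only [Complex.add_im, Complex.ofReal_im, Complex.mul_im, Complex.I_im, Complex.I_re,
      Complex.ofReal_re, zero_add, mul_one, mul_zero, add_zero] at this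
    linarith
  have h2 : IntegrableOn (fun y : ℝ => f (↑x + ↑y * Complex.I)) (Ioi 1) := by
    refine (hmaj.integrableOn).mono' hcont.aestronglyMeasurable.restrict ?_
    refine (ae_restrict_iff' measurableSet_Ioi).2 (ae_of_all _ fun y hy => ?_)
    exact htail y (by rw [abs_of_pos (by linarith [mem_Ioi.1 hy])]; linarith [mem_Ioi.1 hy])
  have h3 : IntegrableOn (fun y : ℝ => f (↑x + ↑y * Complex.I)) (Iio (-1)) := by
    refine (hmaj.integrableOn).mono' hcont.aestronglyMeasurable.restrict ?_
    refine (ae_restrict_iff' measurableSet_Iio).2 (ae_of_all _ fun y hy => ?_)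
    exact htail y (by rw [abs_of_neg (by linarith [mem_Iio.1 hy])]; linarith [mem_Iio.1 hy])
  have h1 : IntegrableOn (fun y : ℝ => f (↑x + ↑y * Complex.I)) (Icc (-1) 1) :=
    hcont.integrableOn_Icc
  have := (h3.union (h1.union h2))
  rwa [Icc_union_Ioi_eq_Ici (by norm_num), Iio_union_Ici, integrableOn_univ] at this

open Set Filter Complex FourierTransform in
private lemma rf_exp_int {lam μ M α : ℝ} {f : ℂ → ℂ}
    (hf : DifferentiableOn ℂ f {s : ℂ | lam < s.re}) (hμ : lam ≤ μ) (hα : 1 < α) (hM : 0 < M)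
    (hbound : ∀ s : ℂ, μ < s.re → ‖f s‖ ≤ M * ‖s‖ ^ (-α))
    {x : ℝ} (hx : μ < x) (t : ℝ) :
    Integrable fun y : ℝ =>
      Complex.exp ((↑x + ↑y * Complex.I) * ↑t) * f (↑x + ↑y * Complex.I) := by
  refine (rf_int hf hμ hα hM hbound hx).bdd_mul (c := Real.exp (x * t)) ?_ (ae_of_all _ fun y => ?_)
  · exact (Complex.continuous_exp.comp (by continuity)).aestronglyMeasurable
  · rw [Complex.norm_exp]; norm_num

open Set Filter Complex FourierTransform in
private lemma rf_shift {lam μ M α : ℝ} {f : ℂ → ℂ}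
    (hf : DifferentiableOn ℂ f {s : ℂ | lam < s.re}) (hμ : lam ≤ μ) (hα : 1 < α) (hM : 0 < M)
    (hbound : ∀ s : ℂ, μ < s.re → ‖f s‖ ≤ M * ‖s‖ ^ (-α))
    {x₁ x₂ : ℝ} (h1 : μ < x₁) (h12 : x₁ ≤ x₂) (t : ℝ)
    (hi1 : Integrable fun y : ℝ =>
      Complex.exp ((↑x₁ + ↑y * Complex.I) * ↑t) * f (↑x₁ + ↑y * Complex.I))
    (hi2 : Integrable fun y : ℝ =>
      Complex.exp ((↑x₂ + ↑y * Complex.I) * ↑t) * f (↑x₂ + ↑y * Complex.I)) :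
    (∫ y : ℝ, Complex.exp ((↑x₁ + ↑y * Complex.I) * ↑t) * f (↑x₁ + ↑y * Complex.I)) =
    ∫ y : ℝ, Complex.exp ((↑x₂ + ↑y * Complex.I) * ↑t) * f (↑x₂ + ↑y * Complex.I) := by
  have h2 : μ < x₂ := lt_of_lt_of_le h1 h12
  set F : ℂ → ℂ := fun z => Complex.exp (z * ↑t) * f z with hF
  set E : ℝ := max (Real.exp (x₁ * t)) (Real.exp (x₂ * t)) with hE
  have key : ∀ T : ℝ,
      ((I • ∫ y in (-T)..T, F (↑x₂ + ↑y * I)) - I • ∫ y in (-T)..T, F (↑x₁ + ↑y * I)) =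
      (∫ σ in x₁..x₂, F (↑σ + ↑(T:ℝ) * I)) - ∫ σ in x₁..x₂, F (↑σ + ↑(-T : ℝ) * I) := by
    intro T
    have hd : DifferentiableOn ℂ F
        (uIcc ((↑x₁ + ↑(-T:ℝ) * I : ℂ).re) ((↑x₂ + ↑(T:ℝ) * I : ℂ).re) ×ℂ
         uIcc ((↑x₁ + ↑(-T:ℝ) * I : ℂ).im) ((↑x₂ + ↑(T:ℝ) * I : ℂ).im)) := by
      refine DifferentiableOn.mul ?_ (hf.mono ?_)
      · exact (Complex.differentiable_exp.comp (differentiable_id.mul_const _)).differentiableOn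
      · intro z hz
        rw [Complex.mem_reProdIm] at hz
        have := hz.1
        simp only [Complex.add_re, Complex.ofReal_re, Complex.mul_re, Complex.I_re, Complex.I_im,
          Complex.ofReal_im, mul_zero, zero_mul, mul_one, sub_zero, zero_sub, add_zero,
          uIcc_of_le h12, mem_Icc] at this
        exact lt_of_le_of_lt hμ (lt_of_lt_of_le h1 this.1)
    have h0 := Complex.integral_boundary_rect_eq_zero_of_differentiableOn F
      (↑x₁ + ↑(-T:ℝ) * I) (↑x₂ + ↑(T:ℝ) * I) hd
    simp only [Complex.add_re, Complex.add_im, Complex.ofReal_re, Complex.ofReal_im,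
      Complex.mul_re, Complex.mul_im, Complex.I_re, Complex.I_im, mul_zero, zero_mul,
      mul_one, sub_zero, zero_sub, add_zero, zero_add, neg_neg] at h0 ⊢
    linear_combination h0
  have hlim1 : Tendsto (fun T : ℝ =>
      (I • ∫ y in (-T)..T, F (↑x₂ + ↑y * I)) - I • ∫ y in (-T)..T, F (↑x₁ + ↑y * I)) atTop
      (nhds ((I • ∫ y : ℝ, F (↑x₂ + ↑y * I)) - I • ∫ y : ℝ, F (↑x₁ + ↑y * I))) := by
    refine Tendsto.sub (Tendsto.const_smul ?_ _) (Tendsto.const_smul ?_ _)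
    · exact intervalIntegral_tendsto_integral hi2 tendsto_neg_atTop_atBot tendsto_id
    · exact intervalIntegral_tendsto_integral hi1 tendsto_neg_atTop_atBot tendsto_id
  have hlim0 : Tendsto (fun T : ℝ =>
      (∫ σ in x₁..x₂, F (↑σ + ↑(T:ℝ) * I)) - ∫ σ in x₁..x₂, F (↑σ + ↑(-T : ℝ) * I)) atTop
      (nhds 0) := by
    apply squeeze_zero_norm' (a := fun T => (E * (M * T ^ (-α)) * |x₂ - x₁|) * 2)
    · filter_upwards [eventually_gt_atTop 0] with T hT
      have hbd : ∀ b : ℝ, |b| = T → ∀ σ ∈ Set.uIoc x₁ x₂, ‖F (↑σ + ↑b * I)‖ ≤ E * (M * T ^ (-α)) := by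
        intro b hb σ hσ
        rw [uIoc_of_le h12] at hσ
        have hσ1 : x₁ < σ := hσ.1
        have hσ2 : σ ≤ x₂ := hσ.2
        have habs : T ≤ ‖↑σ + ↑b * I‖ := by
          have := Complex.abs_im_le_norm (↑σ + ↑b * I)
          simpa [hb] using this
        have hfb : ‖f (↑σ + ↑b * I)‖ ≤ M * T ^ (-α) := by
          refine (hbound _ (by simp; linarith)).trans ?_
          exact mul_le_mul_of_nonneg_left
            (Real.rpow_le_rpow_of_nonpos hT habs (by linarith)) hM.le
        have hexp : ‖Complex.exp ((↑σ + ↑b * I) * ↑t)‖ ≤ E := by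
          rw [Complex.norm_exp]
          have : ((↑σ + ↑b * I) * ↑t).re = σ * t := by simp
          rw [this]
          rcases le_total 0 t with ht | ht
          · exact le_max_of_le_right (Real.exp_le_exp.2 (mul_le_mul_of_nonneg_right hσ2 ht))
          · exact le_max_of_le_left (Real.exp_le_exp.2 (mul_le_mul_of_nonpos_right hσ1.le ht))
        calc ‖F (↑σ + ↑b * I)‖ = ‖Complex.exp ((↑σ + ↑b * I) * ↑t)‖ * ‖f (↑σ + ↑b * I)‖ :=
              norm_mul _ _
          _ ≤ E * (M * T ^ (-α)) := by
              refine mul_le_mul hexp ?_ (norm_nonneg _) ?_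
              · exact hfb
              · exact le_max_of_le_left (Real.exp_pos _).le
      have b1 := intervalIntegral.norm_integral_le_of_norm_le_const (hbd T (abs_of_pos hT))
      have b2 := intervalIntegral.norm_integral_le_of_norm_le_const
        (hbd (-T) (by rw [abs_neg, abs_of_pos hT]))
      calc ‖(∫ σ in x₁..x₂, F (↑σ + ↑(T:ℝ) * I)) - ∫ σ in x₁..x₂, F (↑σ + ↑(-T : ℝ) * I)‖
          ≤ ‖∫ σ in x₁..x₂, F (↑σ + ↑(T:ℝ) * I)‖ + ‖∫ σ in x₁..x₂, F (↑σ + ↑(-T : ℝ) * I)‖ :=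
            norm_sub_le _ _
        _ ≤ E * (M * T ^ (-α)) * |x₂ - x₁| + E * (M * T ^ (-α)) * |x₂ - x₁| := add_le_add b1 b2
        _ = (E * (M * T ^ (-α)) * |x₂ - x₁|) * 2 := by ring
    · have h : Tendsto (fun T : ℝ => T ^ (-α)) atTop (nhds 0) := tendsto_rpow_neg_atTop (by linarith)
      have := ((h.const_mul M).const_mul E).mul_const (|x₂ - x₁|) |>.mul_const 2
      simpa using this
  have heq : (I • ∫ y : ℝ, F (↑x₂ + ↑y * I)) - I • ∫ y : ℝ, F (↑x₁ + ↑y * I) = 0 := by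
    refine tendsto_nhds_unique hlim1 ?_
    exact (tendsto_congr fun T => (key T).symm).1 hlim0
  have : (I : ℂ) * ∫ y : ℝ, F (↑x₂ + ↑y * I) = I * ∫ y : ℝ, F (↑x₁ + ↑y * I) := by
    have := sub_eq_zero.1 heq
    simpa [smul_eq_mul] using this
  exact (mul_left_cancel₀ Complex.I_ne_zero this).symm

open Set Filter Complex FourierTransform in
private lemma rf_normI {lam μ M α : ℝ} {f : ℂ → ℂ}
    (hf : DifferentiableOn ℂ f {s : ℂ | lam < s.re}) (hμ : lam ≤ μ) (hα : 1 < α) (hM : 0 < M)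
    (hbound : ∀ s : ℂ, μ < s.re → ‖f s‖ ≤ M * ‖s‖ ^ (-α))
    {x : ℝ} (hx : μ < x) (t : ℝ) :
    ‖∫ y : ℝ, Complex.exp ((↑x + ↑y * Complex.I) * ↑t) * f (↑x + ↑y * Complex.I)‖ ≤
      Real.exp (x * t) * ∫ y : ℝ, ‖f (↑x + ↑y * Complex.I)‖ := by
  refine (norm_integral_le_integral_norm _).trans ?_
  rw [← integral_const_mul]
  refine le_of_eq (integral_congr_ae (ae_of_all _ fun y => ?_))
  show ‖_ * _‖ = _
  rw [norm_mul]
  congr 1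
  rw [Complex.norm_exp]
  norm_num

open Set Filter Complex FourierTransform in
private lemma rf_unif {lam μ M α : ℝ} {f : ℂ → ℂ}
    (hf : DifferentiableOn ℂ f {s : ℂ | lam < s.re}) (hμ : lam ≤ μ) (hα : 1 < α) (hM : 0 < M)
    (hbound : ∀ s : ℂ, μ < s.re → ‖f s‖ ≤ M * ‖s‖ ^ (-α))
    {x : ℝ} (hx : μ < x) (hx1 : 1 ≤ x) :
    (∫ y : ℝ, ‖f (↑x + ↑y * Complex.I)‖) ≤ ∫ y : ℝ, M * 2 ^ α * (1 + ‖y‖) ^ (-α) := by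
  refine integral_mono (rf_int hf hμ hα hM hbound hx).norm (rf_majorant_int hα) fun y => ?_
  refine rf_ptbound hα hM hbound hx ?_
  have h1 := Complex.abs_re_le_norm (↑x + ↑y * Complex.I)
  have h2 := Complex.abs_im_le_norm (↑x + ↑y * Complex.I)
  simp only [Complex.add_re, Complex.add_im, Complex.ofReal_re, Complex.ofReal_im,
    Complex.mul_re, Complex.mul_im, Complex.I_re, Complex.I_im, mul_zero, zero_mul,
    mul_one, sub_zero, zero_add, add_zero] at h1 h2
  rw [abs_of_pos (by linarith)] at h1
  linarith

open Set Filter Complex FourierTransform in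
/-- **Riemann–Fourier inversion formula.** Let f be holomorphic on
{Re s > λ} and suppose |f(s)| ≤ M|s|^{−α} for Re s > μ, with μ ≥ λ, α > 1, M > 0.
Then the function u(t) = (1/2π) ∫_{−∞}^{∞} e^{(x+iy)t} f(x+iy) dy (x > μ) is
well defined by an absolutely convergent integral, independent of x > μ,
continuous on ℝ, vanishes for t < 0, and for every s with Re s > μ the function
t ↦ e^{−st} u(t) is absolutely integrable on (0,∞) with ∫₀^∞ e^{−st} u(t) dt = f(s);
that is, u is the inverse Laplace transform of f. -/
theorem riemann_fourier_inversion
    (lam : ℝ) (f : ℂ → ℂ)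
    (hf : DifferentiableOn ℂ f {s : ℂ | lam < s.re})
    (μ M α : ℝ) (hμ : lam ≤ μ) (hα : 1 < α) (hM : 0 < M)
    (hbound : ∀ s : ℂ, μ < s.re →
      ‖f s‖ ≤ M * ‖s‖ ^ (-α)) :
    ∃ u : ℝ → ℂ,
      (∀ x : ℝ, μ < x → ∀ t : ℝ,
        Integrable (fun y : ℝ =>
          Complex.exp ((x + y * Complex.I) * t) * f (x + y * Complex.I)) ∧
        u t = (1 / (2 * Real.pi)) *
          ∫ y : ℝ, Complex.exp ((x + y * Complex.I) * t) * f (x + y * Complex.I)) ∧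
      Continuous u ∧
      (∀ t : ℝ, t < 0 → u t = 0) ∧
      (∀ s : ℂ, μ < s.re →
        IntegrableOn (fun t : ℝ => Complex.exp (-s * t) * u t) (Set.Ioi 0) ∧
        ∫ t in Set.Ioi (0 : ℝ), Complex.exp (-s * t) * u t = f s) := by
  have hpi : (0:ℝ) < Real.pi := Real.pi_pos
  have hμ1 : μ < μ + 1 := lt_add_one μ
  have hJeq : ∀ {a b : ℝ}, μ < a → μ < b → ∀ t : ℝ,
      (∫ y : ℝ, Complex.exp ((↑a + ↑y * I) * ↑t) * f (↑a + ↑y * I)) =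
      ∫ y : ℝ, Complex.exp ((↑b + ↑y * I) * ↑t) * f (↑b + ↑y * I) := by
    intro a b ha hb t
    rcases le_total a b with h | h
    · exact rf_shift hf hμ hα hM hbound ha h t
        (rf_exp_int hf hμ hα hM hbound ha t) (rf_exp_int hf hμ hα hM hbound hb t)
    · exact (rf_shift hf hμ hα hM hbound hb h t
        (rf_exp_int hf hμ hα hM hbound hb t) (rf_exp_int hf hμ hα hM hbound ha t)).symm
  set u : ℝ → ℂ := fun t =>
    (1 / (2 * Real.pi)) * ∫ y : ℝ, Complex.exp ((↑(μ+1) + ↑y * I) * ↑t) * f (↑(μ+1) + ↑y * I)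
    with hudef
  have hform : ∀ x : ℝ, μ < x → ∀ t : ℝ, u t =
      (1 / (2 * Real.pi)) * ∫ y : ℝ, Complex.exp ((↑x + ↑y * I) * ↑t) * f (↑x + ↑y * I) := by
    intro x hx t
    rw [hudef]
    exact congrArg _ (hJeq hμ1 hx t)
  have hcnorm : ‖(1 / (2 * Real.pi) : ℂ)‖ = (2 * Real.pi)⁻¹ := by
    have h2 : (2 * Real.pi : ℂ) = ((2 * Real.pi : ℝ) : ℂ) := by push_cast; ring
    rw [norm_div, norm_one, h2, Complex.norm_real, Real.norm_eq_abs,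
      abs_of_pos (by linarith), one_div]
  have hnorm : ∀ x : ℝ, μ < x → ∀ t : ℝ,
      ‖u t‖ ≤ (2 * Real.pi)⁻¹ * (Real.exp (x * t) * ∫ y : ℝ, ‖f (↑x + ↑y * I)‖) := by
    intro x hx t
    rw [hform x hx t, norm_mul, hcnorm]
    exact mul_le_mul_of_nonneg_left (rf_normI hf hμ hα hM hbound hx t)
      (by positivity)
  -- splitting off the exponential
  have hsplit : ∀ x t : ℝ,
      (∫ y : ℝ, Complex.exp ((↑x + ↑y * I) * ↑t) * f (↑x + ↑y * I)) =
      Complex.exp (↑(x*t)) * ∫ y : ℝ, Complex.exp (↑(y*t) * I) * f (↑x + ↑y * I) := by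
    intro x t
    rw [← integral_const_mul]
    refine integral_congr_ae (ae_of_all _ fun y => ?_)
    show Complex.exp ((↑x + ↑y * I) * ↑t) * f (↑x + ↑y * I) =
      Complex.exp (↑(x*t)) * (Complex.exp (↑(y*t) * I) * f (↑x + ↑y * I))
    rw [← mul_assoc, ← Complex.exp_add]
    congr 2
    push_cast; ring
  -- continuity
  have hcont : Continuous u := by
    have hΦ : Continuous fun t : ℝ => ∫ y : ℝ, Complex.exp (↑(y*t) * I) * f (↑(μ+1) + ↑y * I) := by
      apply continuous_of_dominated
        (bound := fun y : ℝ => ‖f (↑(μ+1) + ↑y * I)‖)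
      · intro t
        exact ((Complex.continuous_exp.comp (by continuity)).mul
          (rf_cont hf (by linarith))).aestronglyMeasurable
      · intro t
        refine ae_of_all _ fun y => ?_
        show ‖_ * _‖ ≤ _
        rw [norm_mul]
        have h1 : ‖Complex.exp (↑(y*t) * I)‖ = 1 := by
          rw [Complex.norm_exp]; simp
        rw [h1, one_mul]
      · exact (rf_int hf hμ hα hM hbound hμ1).norm
      · refine ae_of_all _ fun y => ?_
        exact (Complex.continuous_exp.comp (by continuity)).mul continuous_const
    have : u = fun t => (1 / (2 * Real.pi) : ℂ) * (Complex.exp (↑((μ+1)*t)) *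
        ∫ y : ℝ, Complex.exp (↑(y*t) * I) * f (↑(μ+1) + ↑y * I)) := by
      funext t
      rw [hudef]
      simp only
      rw [hsplit (μ+1) t]
    rw [this]
    exact continuous_const.mul ((Complex.continuous_exp.comp (by continuity)).mul hΦ)
  -- vanishing for t < 0
  have hvanish : ∀ t : ℝ, t < 0 → u t = 0 := by
    intro t ht
    have hb : ∀ x : ℝ, max (μ+1) 1 ≤ x →
        ‖u t‖ ≤ (2 * Real.pi)⁻¹ * (Real.exp (x * t) * ∫ y : ℝ, M * 2 ^ α * (1 + ‖y‖) ^ (-α)) := by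
      intro x hx
      have hxμ : μ < x := lt_of_lt_of_le hμ1 (le_trans (le_max_left _ _) hx)
      refine (hnorm x hxμ t).trans ?_
      have h1 := rf_unif hf hμ hα hM hbound hxμ (le_trans (le_max_right _ _) hx)
      gcongr
    have hlim : Tendsto (fun x : ℝ =>
        (2 * Real.pi)⁻¹ * (Real.exp (x * t) * ∫ y : ℝ, M * 2 ^ α * (1 + ‖y‖) ^ (-α)))
        atTop (nhds 0) := by
      have h1 : Tendsto (fun x : ℝ => x * t) atTop atBot := (tendsto_mul_const_atBot_of_neg ht).2 tendsto_id
      have h2 := Real.tendsto_exp_atBot.comp h1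
      have h3 := (h2.mul_const (∫ y : ℝ, M * 2 ^ α * (1 + ‖y‖) ^ (-α))).const_mul
        ((2 * Real.pi)⁻¹)
      simpa using h3
    have h0 : ‖u t‖ ≤ 0 := ge_of_tendsto hlim (eventually_atTop.2 ⟨max (μ+1) 1, hb⟩)
    exact norm_le_zero_iff.1 h0
  -- integrability of the Laplace integrand on all of ℝ
  have hwint : ∀ sc : ℂ, μ < sc.re → Integrable fun t : ℝ => Complex.exp (-sc * ↑t) * u t := by
    intro sc hsc
    set x' : ℝ := (μ + sc.re) / 2 with hx'def
    have hx'1 : μ < x' := by rw [hx'def]; linarith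
    have hx'2 : x' < sc.re := by rw [hx'def]; linarith
    set B : ℝ := (2 * Real.pi)⁻¹ * ∫ y : ℝ, ‖f (↑x' + ↑y * I)‖ with hBdef
    have hB : ∀ t : ℝ, ‖u t‖ ≤ B * Real.exp (x' * t) := by
      intro t
      refine (hnorm x' hx'1 t).trans (le_of_eq ?_)
      rw [hBdef]; ring
    have hmeas : AEStronglyMeasurable (fun t : ℝ => Complex.exp (-sc * ↑t) * u t) volume :=
      ((Complex.continuous_exp.comp (by continuity)).mul hcont).aestronglyMeasurable
    have hIio : IntegrableOn (fun t : ℝ => Complex.exp (-sc * ↑t) * u t) (Iio 0) := by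
      refine IntegrableOn.congr_fun
        (integrableOn_zero : IntegrableOn (fun _ : ℝ => (0:ℂ)) (Iio 0) volume)
        (fun t ht => ?_) measurableSet_Iio
      rw [hvanish t ht, mul_zero]
    have hIci : IntegrableOn (fun t : ℝ => Complex.exp (-sc * ↑t) * u t) (Ici 0) := by
      have hmaj : IntegrableOn (fun t : ℝ => B * Real.exp (-(sc.re - x') * t)) (Ici 0) :=
        (integrableOn_Ici_iff_integrableOn_Ioi (b := 0)
          (f := fun t : ℝ => B * Real.exp (-(sc.re - x') * t)) enorm_ne_top).2
          ((exp_neg_integrableOn_Ioi 0 (by linarith)).const_mul B)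
      refine hmaj.mono' hmeas.restrict
        ((ae_restrict_iff' measurableSet_Ici).2 (ae_of_all _ fun t ht => ?_))
      show ‖_ * _‖ ≤ _
      rw [norm_mul]
      have he : ‖Complex.exp (-sc * ↑t)‖ = Real.exp (-sc.re * t) := by
        rw [Complex.norm_exp]
        congr 1
        simp [Complex.mul_re]
      rw [he]
      calc Real.exp (-sc.re * t) * ‖u t‖
          ≤ Real.exp (-sc.re * t) * (B * Real.exp (x' * t)) :=
            mul_le_mul_of_nonneg_left (hB t) (Real.exp_pos _).le
        _ = B * (Real.exp (x' * t) * Real.exp (-sc.re * t)) := by ring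
        _ = B * Real.exp (-(sc.re - x') * t) := by
            rw [← Real.exp_add]; congr 1; ring
    have := hIio.union hIci
    rwa [Iio_union_Ici, integrableOn_univ] at this
  -- assemble
  refine ⟨u, fun x hx t => ⟨rf_exp_int hf hμ hα hM hbound hx t, hform x hx t⟩, hcont, hvanish,
    fun s hs => ?_⟩
  have hw := hwint s hs
  have hw₀ := hwint (s.re : ℂ) (by simpa using hs)
  refine ⟨hw.integrableOn, ?_⟩
  set g : ℝ → ℂ := fun y => f (↑s.re + ↑y * I) with hgdef
  have hgi : Integrable g := rf_int hf hμ hα hM hbound hs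
  have hgc : Continuous g := rf_cont hf (lt_of_le_of_lt hμ hs)
  have hπne : (2 * Real.pi : ℂ) ≠ 0 := by
    have : (2 * Real.pi : ℂ) = ((2 * Real.pi : ℝ) : ℂ) := by push_cast; ring
    rw [this]
    exact_mod_cast (by positivity : (2 * Real.pi : ℝ) ≠ 0)
  have hstar : ∀ τ : ℝ, 𝓕 g τ =
      (2 * Real.pi : ℂ) * (Complex.exp (-(↑s.re : ℂ) * ↑(-2 * Real.pi * τ)) *
        u (-2 * Real.pi * τ)) := by
    intro τ
    have h1 := hform s.re hs (-2 * Real.pi * τ)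
    rw [hsplit s.re (-2 * Real.pi * τ)] at h1
    have h3 : (∫ y : ℝ, Complex.exp (↑(y * (-2 * Real.pi * τ)) * I) * f (↑s.re + ↑y * I)) =
        𝓕 g τ := by
      rw [Real.fourier_real_eq_integral_exp_smul]
      refine integral_congr_ae (ae_of_all _ fun y => ?_)
      have harg : y * (-2 * Real.pi * τ) = -2 * Real.pi * y * τ := by ring
      show Complex.exp (↑(y * (-2 * Real.pi * τ)) * I) * f (↑s.re + ↑y * I) =
        Complex.exp (↑(-2 * Real.pi * y * τ) * I) • g y
      rw [harg, smul_eq_mul]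
    rw [h3] at h1
    rw [h1]
    symm
    have hAB : Complex.exp (-(↑s.re : ℂ) * ↑(-2 * Real.pi * τ)) *
        Complex.exp (↑(s.re * (-2 * Real.pi * τ))) = 1 := by
      rw [← Complex.exp_add, ← Complex.exp_zero]
      congr 1
      push_cast; ring
    calc (2 * Real.pi : ℂ) * (Complex.exp (-(↑s.re : ℂ) * ↑(-2 * Real.pi * τ)) *
          (1 / (2 * Real.pi) * (Complex.exp (↑(s.re * (-2 * Real.pi * τ))) * 𝓕 g τ)))
        = (Complex.exp (-(↑s.re : ℂ) * ↑(-2 * Real.pi * τ)) *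
            Complex.exp (↑(s.re * (-2 * Real.pi * τ)))) * 𝓕 g τ *
            ((2 * Real.pi : ℂ) * (1 / (2 * Real.pi))) := by ring
      _ = 𝓕 g τ := by rw [hAB, mul_one_div_cancel hπne]; ring
  -- integrability of the Fourier transform of g
  have hFgi : Integrable (𝓕 g) := by
    have h4 : (𝓕 g) = fun τ : ℝ => (2 * Real.pi : ℂ) *
        (fun t : ℝ => Complex.exp (-(↑s.re : ℂ) * ↑t) * u t) (-2 * Real.pi * τ) := by
      funext τ
      exact hstar τ
    rw [h4]
    exact (hw₀.comp_mul_left'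
      (mul_ne_zero (by norm_num) Real.pi_ne_zero)).const_mul _
  -- Fourier inversion
  have hinv : 𝓕⁻ (𝓕 g) s.im = g s.im :=
    hgi.fourierInv_fourier_eq hFgi hgc.continuousAt
  have hlhs : 𝓕⁻ (𝓕 g) s.im =
      ∫ τ : ℝ, Complex.exp (↑(2 * Real.pi * (τ * s.im)) * I) • 𝓕 g τ := by
    rw [Real.fourierInv_eq']
    norm_num [RCLike.inner_apply]
    simp only [mul_comm (↑s.im : ℂ)]
  have hclaim : ∀ τ : ℝ, Complex.exp (↑(2 * Real.pi * (τ * s.im)) * I) • 𝓕 g τ =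
      (2 * Real.pi : ℝ) • (fun t : ℝ => Complex.exp (-s * ↑t) * u t) (-2 * Real.pi * τ) := by
    intro τ
    rw [hstar τ]
    show Complex.exp (↑(2 * Real.pi * (τ * s.im)) * I) •
        ((2 * Real.pi : ℂ) * (Complex.exp (-(↑s.re : ℂ) * ↑(-2 * Real.pi * τ)) *
          u (-2 * Real.pi * τ))) =
      (2 * Real.pi : ℝ) • (Complex.exp (-s * ↑(-2 * Real.pi * τ)) * u (-2 * Real.pi * τ))
    rw [smul_eq_mul, Complex.real_smul]
    have hexp : Complex.exp (↑(2 * Real.pi * (τ * s.im)) * I) *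
        Complex.exp (-(↑s.re : ℂ) * ↑(-2 * Real.pi * τ)) =
        Complex.exp (-s * ↑(-2 * Real.pi * τ)) := by
      rw [← Complex.exp_add]
      congr 1
      conv_rhs => rw [← Complex.re_add_im s]
      push_cast
      ring
    calc Complex.exp (↑(2 * Real.pi * (τ * s.im)) * I) *
          ((2 * Real.pi : ℂ) * (Complex.exp (-(↑s.re : ℂ) * ↑(-2 * Real.pi * τ)) *
            u (-2 * Real.pi * τ)))
        = (Complex.exp (↑(2 * Real.pi * (τ * s.im)) * I) *
            Complex.exp (-(↑s.re : ℂ) * ↑(-2 * Real.pi * τ))) *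
            u (-2 * Real.pi * τ) * (2 * Real.pi : ℂ) := by ring
      _ = ((2 * Real.pi : ℝ) : ℂ) * (Complex.exp (-s * ↑(-2 * Real.pi * τ)) *
            u (-2 * Real.pi * τ)) := by rw [hexp]; push_cast; ring
  have hint2 : (∫ τ : ℝ, Complex.exp (↑(2 * Real.pi * (τ * s.im)) * I) • 𝓕 g τ) =
      ∫ t : ℝ, Complex.exp (-s * ↑t) * u t := by
    rw [integral_congr_ae (ae_of_all _ hclaim), integral_smul,
      MeasureTheory.Measure.integral_comp_mul_left
        (fun t : ℝ => Complex.exp (-s * ↑t) * u t) (-2 * Real.pi), smul_smul]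
    have habs : (2 * Real.pi : ℝ) * |(-2 * Real.pi)⁻¹| = 1 := by
      rw [abs_inv]
      have h5 : |(-2 * Real.pi : ℝ)| = 2 * Real.pi := by
        rw [abs_of_neg (by linarith : (-2 * Real.pi : ℝ) < 0)]; ring
      rw [h5]
      exact mul_inv_cancel₀ (by positivity)
    rw [habs, one_smul]
  have hfull : (∫ t : ℝ, Complex.exp (-s * ↑t) * u t) =
      ∫ t in Ioi (0:ℝ), Complex.exp (-s * ↑t) * u t := by
    have hsplit2 := setIntegral_union (Iio_disjoint_Ici (le_refl (0:ℝ)))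
      measurableSet_Ici hw.integrableOn hw.integrableOn
    rw [Iio_union_Ici, setIntegral_univ] at hsplit2
    rw [hsplit2, setIntegral_eq_zero_of_forall_eq_zero
      (fun t ht => by rw [hvanish t ht, mul_zero]), zero_add, integral_Ici_eq_integral_Ioi]
  have : f s = ∫ t in Ioi (0:ℝ), Complex.exp (-s * ↑t) * u t := by
    calc f s = f (↑s.re + ↑s.im * I) := by rw [Complex.re_add_im]
      _ = g s.im := rfl
      _ = 𝓕⁻ (𝓕 g) s.im := hinv.symm
      _ = ∫ τ : ℝ, Complex.exp (↑(2 * Real.pi * (τ * s.im)) * I) • 𝓕 g τ := hlhs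
      _ = ∫ t : ℝ, Complex.exp (-s * ↑t) * u t := hint2
      _ = ∫ t in Ioi (0:ℝ), Complex.exp (-s * ↑t) * u t := hfull
  exact this.symm
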